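/- Each row of a product of k irreducible nonnegative N×N matrices with positive diagonal entries has at least min(k+1, N) positive entries; in particular, for 1 ≤ k ≤ N−1 each row has at least k+1 positive entries. -/

import Mathlib

/-- A nonnegative square matrix is irreducible: any two indices are joined by a
path of positive entries. -/
def Irred {N : ℕ} (A : Matrix (Fin N) (Fin N) ℝ) : Prop :=
  ∀ i j : Fin N, ∃ n : ℕ, ∃ c : Fin (n + 1) → Fin N,
    c 0 = i ∧ c (Fin.last n) = j ∧ ∀ m : Fin n, 0 < A (c m.castSucc) (c m.succ)

lemma list_prod_nonneg' {N : ℕ} (l : List (Matrix (Fin N) (Fin N) ℝ))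
    (h : ∀ M ∈ l, ∀ i j, 0 ≤ M i j) : ∀ i j, 0 ≤ l.prod i j := by
  induction l with
  | nil =>
    intro i j
    rw [List.prod_nil]
    by_cases hij : i = j <;> simp [Matrix.one_apply, hij]
  | cons M l ih =>
    intro i j
    rw [List.prod_cons, Matrix.mul_apply]
    refine Finset.sum_nonneg fun s _ => mul_nonneg (h M (List.mem_cons_self) i s) ?_
    exact ih (fun M' hM' => h M' (List.mem_cons_of_mem _ hM')) s j

lemma mul_entry_pos {N : ℕ} (P B : Matrix (Fin N) (Fin N) ℝ)
    (hP : ∀ i j, 0 ≤ P i j) (hB : ∀ i j, 0 ≤ B i j) (i s j : Fin N)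
    (h1 : 0 < P i s) (h2 : 0 < B s j) : 0 < (P * B) i j := by
  rw [Matrix.mul_apply]
  exact Finset.sum_pos' (fun t _ => mul_nonneg (hP i t) (hB t j))
    ⟨s, Finset.mem_univ s, mul_pos h1 h2⟩

lemma first_exit {N n : ℕ} (S : Finset (Fin N)) (c : Fin (n + 1) → Fin N)
    (h0 : c 0 ∈ S) (hl : c (Fin.last n) ∉ S) :
    ∃ m : Fin n, c m.castSucc ∈ S ∧ c m.succ ∉ S := by
  by_contra h
  push_neg at h
  have hall : ∀ m : Fin (n + 1), c m ∈ S := by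
    intro m
    induction m using Fin.induction with
    | zero => exact h0
    | succ m ih => exact h m ih
  exact hl (hall _)

lemma main_aux {N : ℕ} : ∀ k (A : Fin k → Matrix (Fin N) (Fin N) ℝ),
    (∀ l i j, 0 ≤ A l i j) → (∀ l, Irred (A l)) → (∀ l i, 0 < A l i i) →
    ∀ i : Fin N,
      min (k + 1) N ≤ (Finset.univ.filter fun j => 0 < (List.ofFn A).prod i j).card := by
  intro k
  induction k with
  | zero =>
    intro A _ _ _ i
    have hi : i ∈ Finset.univ.filter fun j => 0 < (List.ofFn A).prod i j := by
      simp [Matrix.one_apply_eq]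
    exact le_trans (min_le_left _ _) (Finset.one_le_card.mpr ⟨i, hi⟩)
  | succ k ih =>
    intro A hnn hirr hdiag i
    set P := (List.ofFn fun m : Fin k => A m.castSucc).prod with hPdef
    set B := A (Fin.last k) with hBdef
    have hprod : (List.ofFn A).prod = P * B := by
      rw [List.ofFn_succ', List.prod_concat]
    have hPnn : ∀ a b, 0 ≤ P a b := by
      refine list_prod_nonneg' _ ?_
      intro M hM
      rw [List.mem_ofFn] at hM
      obtain ⟨m, rfl⟩ := hM
      exact hnn _
    have hBnn : ∀ a b, 0 ≤ B a b := hnn _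
    set S := Finset.univ.filter fun j => 0 < P i j with hSdef
    set T := Finset.univ.filter fun j => 0 < (P * B) i j with hTdef
    have hST : S ⊆ T := by
      intro j hj
      rw [hSdef, Finset.mem_filter] at hj
      rw [hTdef, Finset.mem_filter]
      exact ⟨Finset.mem_univ _, mul_entry_pos P B hPnn hBnn i j j hj.2 (hdiag _ j)⟩
    have hS : min (k + 1) N ≤ S.card :=
      ih _ (fun l => hnn l.castSucc) (fun l => hirr l.castSucc)
        (fun l => hdiag l.castSucc) i
    have hgoal : (Finset.univ.filter fun j => 0 < (List.ofFn A).prod i j) = T := by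
      rw [hTdef, hprod]
    rw [hgoal]
    by_cases hcase : min (k + 1 + 1) N ≤ S.card
    · exact hcase.trans (Finset.card_le_card hST)
    · push_neg at hcase
      have hk1 : k + 1 ≤ S.card := by omega
      have hSlt : S.card < N := hcase.trans_le (min_le_right _ _)
      obtain ⟨s₀, hs₀⟩ : S.Nonempty := Finset.card_pos.mp (by omega)
      obtain ⟨j₀, hj₀⟩ : ∃ j, j ∉ S := by
        by_contra h
        push_neg at h
        have : S.card = N := by
          rw [Finset.eq_univ_iff_forall.mpr h, Finset.card_univ, Fintype.card_fin]
        omega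
      obtain ⟨n, c, hc0, hcl, hcpos⟩ := hirr (Fin.last k) s₀ j₀
      obtain ⟨m, hmS, hmS'⟩ := first_exit S c (hc0 ▸ hs₀) (hcl ▸ hj₀)
      have hj₁T : c m.succ ∈ T := by
        rw [hTdef, Finset.mem_filter]
        refine ⟨Finset.mem_univ _, ?_⟩
        have hPs : 0 < P i (c m.castSucc) := (Finset.mem_filter.mp hmS).2
        exact mul_entry_pos P B hPnn hBnn _ _ _ hPs (hcpos m)
      have hcard : S.card + 1 ≤ T.card := by
        calc S.card + 1 = (insert (c m.succ) S).card :=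
              (Finset.card_insert_of_notMem hmS').symm
          _ ≤ T.card := Finset.card_le_card (Finset.insert_subset hj₁T hST)
      omega

theorem row_positive_entries_of_prod_irreducible {N k : ℕ}
    (A : Fin k → Matrix (Fin N) (Fin N) ℝ)
    (hnn : ∀ l i j, 0 ≤ A l i j) (hirr : ∀ l, Irred (A l))
    (hdiag : ∀ l i, 0 < A l i i) :
    ∀ i : Fin N,
      min (k + 1) N ≤ (Finset.univ.filter fun j => 0 < (List.ofFn A).prod i j).card :=
  main_aux k A hnn hirr hdiag
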